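/- Let 0 < δ < 1 and let Q be a partially ordered set on n points with comp(Q) ≥ δ·n(n−1)/2. Then e(Q) ≤ n!·e^{2/(1−δ)}·(e(1−δ)/2)^n. -/

import Mathlib

open Finset

noncomputable def myE {α : Type} (r : α → α → Prop) (n : ℕ) : ℕ :=
  Nat.card {f : α ≃ Fin n // ∀ x y : α, r x y → f x < f y}

noncomputable def myJ {α : Type} (r : α → α → Prop) : ℕ :=
  Nat.card {p : α × α // p.1 ≠ p.2 ∧ ¬ r p.1 p.2 ∧ ¬ r p.2 p.1}

open scoped Classical in
lemma stepA {α : Type} [Fintype α] (r : α → α → Prop) (n : ℕ) :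
    myE r (n+1) ≤ ∑ x ∈ Finset.univ.filter (fun x : α => ∀ y, ¬ r x y),
      myE (fun a b : {y : α // y ≠ x} => r a.val b.val) n := by
  classical
  set M : Finset α := Finset.univ.filter (fun x : α => ∀ y, ¬ r x y) with hM
  let T : M → Type := fun x =>
    {g : {y : α // y ≠ x.val} ≃ Fin n // ∀ a b : {y : α // y ≠ x.val}, r a.val b.val → g a < g b}
  let D := {f : α ≃ Fin (n+1) // ∀ x y : α, r x y → f x < f y}
  let Φ : D → Σ x : M, T x := fun F =>
    let f := F.val
    let x : α := f.symm (Fin.last n)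
    let hx : ∀ y, ¬ r x y := fun y hy => by
      have h2 := F.property x y hy
      have h3 : f x = Fin.last n := f.apply_symm_apply _
      rw [h3] at h2
      exact absurd h2 (not_lt.mpr (Fin.le_last (f y)))
    let hne : ∀ y : {y : α // y ≠ x}, f y.val ≠ Fin.last n := fun y hy => by
      apply y.property
      have : f y.val = f x := by rw [hy]; exact (f.apply_symm_apply _).symm
      exact f.injective this
    let hne2 : ∀ i : Fin n, f.symm i.castSucc ≠ x := fun i hi => by
      have : f (f.symm i.castSucc) = f x := by rw [hi]
      rw [f.apply_symm_apply, f.apply_symm_apply] at this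
      exact absurd this (Fin.castSucc_lt_last i).ne
    let g : {y : α // y ≠ x} ≃ Fin n :=
      { toFun := fun y => (f y.val).castPred (hne y)
        invFun := fun i => ⟨f.symm i.castSucc, hne2 i⟩
        left_inv := fun y => by
          apply Subtype.ext
          simp [Fin.castSucc_castPred]
        right_inv := fun i => by
          simp [Fin.castPred_castSucc] }
    ⟨⟨x, by simp [hM, hx]⟩, ⟨g, fun a b hab => by
      simpa [g, Fin.castPred_lt_castPred_iff] using F.property a.val b.val hab⟩⟩
  have key : myE r (n+1) ≤ Nat.card (Σ x : M, T x) := by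
    apply Nat.card_le_card_of_injective Φ
    intro F1 F2 hF
    have recon : ∀ F : D, ∀ y : α, (F.val y : Fin (n+1)) =
        (if h : y = ((Φ F).fst.val : α) then Fin.last n else ((Φ F).snd.val ⟨y, h⟩).castSucc) := by
      intro F y
      by_cases h : y = ((Φ F).fst.val : α)
      · rw [dif_pos h, h]
        exact F.val.apply_symm_apply _
      · rw [dif_neg h]
        have hh : F.val y ≠ Fin.last n := fun hl => h (by
          show y = (F.val.symm (Fin.last n))
          rw [← hl, Equiv.symm_apply_apply])
        exact (Fin.castSucc_castPred (F.val y) hh).symm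
    apply Subtype.ext
    apply Equiv.ext
    intro y
    rw [recon F1 y, recon F2 y, hF]
  refine key.trans ?_
  rw [Nat.card_eq_fintype_card, Fintype.card_sigma]
  rw [← Finset.sum_attach M (fun x => myE (fun a b : {y : α // y ≠ x} => r a.val b.val) n)]
  apply le_of_eq
  apply Finset.sum_congr rfl
  intro x _
  rw [myE, Nat.card_eq_fintype_card]

open scoped Classical in
lemma stepB {α : Type} [Fintype α] (r : α → α → Prop) (x : α) (hx : ∀ y, ¬ r x y) :
    myJ (fun a b : {y : α // y ≠ x} => r a.val b.val) +
      2 * ((Finset.univ.filter (fun x : α => ∀ y, ¬ r x y)).erase x).card ≤ myJ r := by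
  classical
  set M : Finset α := Finset.univ.filter (fun x : α => ∀ y, ¬ r x y) with hM
  let sub := {y : α // y ≠ x}
  let A := {p : sub × sub // p.1 ≠ p.2 ∧ ¬ r p.1.val p.2.val ∧ ¬ r p.2.val p.1.val}
  let B := {z : α // z ∈ M.erase x} × Bool
  let C := {p : α × α // p.1 ≠ p.2 ∧ ¬ r p.1 p.2 ∧ ¬ r p.2 p.1}
  have hmax : ∀ z : {z : α // z ∈ M.erase x}, (∀ y, ¬ r z.val y) ∧ z.val ≠ x := fun z => by
    have h1 := (Finset.mem_erase.mp z.property).1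
    have h2 := (Finset.mem_erase.mp z.property).2
    exact ⟨(Finset.mem_filter.mp h2).2, h1⟩
  let ψ : A ⊕ B → C := fun p =>
    match p with
    | Sum.inl ⟨(a, b), h⟩ => ⟨(a.val, b.val), ⟨fun he => h.1 (Subtype.ext he), h.2.1, h.2.2⟩⟩
    | Sum.inr (z, true) => ⟨(x, z.val), ⟨fun he => (hmax z).2 he.symm, hx z.val, (hmax z).1 x⟩⟩
    | Sum.inr (z, false) => ⟨(z.val, x), ⟨(hmax z).2, (hmax z).1 x, hx z.val⟩⟩
  have hinj : Function.Injective ψ := by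
    rintro (⟨⟨a, b⟩, h⟩ | ⟨z, bb⟩) (⟨⟨a', b'⟩, h'⟩ | ⟨z', bb'⟩) heq
    · have e1 : (↑a : α) = ↑a' := congrArg (fun c : C => c.val.1) heq
      have e2 : (↑b : α) = ↑b' := congrArg (fun c : C => c.val.2) heq
      congr 1
      exact Subtype.ext (Prod.ext (Subtype.ext e1) (Subtype.ext e2))
    · cases bb'
      · have e2 : (↑b : α) = x := congrArg (fun c : C => c.val.2) heq
        exact absurd e2 b.property
      · have e1 : (↑a : α) = x := congrArg (fun c : C => c.val.1) heq
        exact absurd e1 a.property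
    · cases bb
      · have e2 : x = (↑b' : α) := congrArg (fun c : C => c.val.2) heq
        exact absurd e2.symm b'.property
      · have e1 : x = (↑a' : α) := congrArg (fun c : C => c.val.1) heq
        exact absurd e1.symm a'.property
    · cases bb <;> cases bb'
      · have e1 : (↑z : α) = ↑z' := congrArg (fun c : C => c.val.1) heq
        congr 1
        exact Prod.ext (Subtype.ext e1) rfl
      · have e1 : x = (↑z' : α) := congrArg (fun c : C => c.val.2) heq
        exact absurd e1.symm (hmax z').2
      · have e1 : x = (↑z' : α) := congrArg (fun c : C => c.val.1) heq
        exact absurd e1.symm (hmax z').2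
      · have e2 : (↑z : α) = ↑z' := congrArg (fun c : C => c.val.2) heq
        congr 1
        exact Prod.ext (Subtype.ext e2) rfl
  have hcard := Nat.card_le_card_of_injective ψ hinj
  rw [Nat.card_sum, Nat.card_prod] at hcard
  have h1 : Nat.card {z : α // z ∈ M.erase x} = (M.erase x).card := by
    rw [Nat.card_eq_fintype_card, Fintype.card_coe]
  have h2 : Nat.card Bool = 2 := by simp [Nat.card_eq_fintype_card]
  rw [h1, h2] at hcard
  calc myJ (fun a b : sub => r a.val b.val) + 2 * (M.erase x).card
      = Nat.card A + (M.erase x).card * 2 := by rw [myJ]; ring_nf; exact add_comm _ _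
    _ ≤ Nat.card C := hcard
    _ = myJ r := rfl


lemma amgm (a t : ℝ) (ha : 0 ≤ a) (ht : 0 ≤ t) (n : ℕ) :
    a * t ^ n * (n+1 : ℝ) ^ (n+1) ≤ (a + n * t) ^ (n+1) := by
  have h1 : (0:ℝ) < (n:ℝ) + 1 := by positivity
  have hw : (1:ℝ)/(n+1) + (n:ℝ)/(n+1) = 1 := by field_simp; ring
  have h := Real.geom_mean_le_arith_mean2_weighted
    (by positivity : (0:ℝ) ≤ 1/(n+1)) (by positivity : (0:ℝ) ≤ (n:ℝ)/(n+1)) ha ht hw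
  have h2 : (a ^ ((1:ℝ)/(n+1)) * t ^ ((n:ℝ)/(n+1))) ^ ((n:ℝ)+1)
      ≤ ((1/(n+1)) * a + ((n:ℝ)/(n+1)) * t) ^ ((n:ℝ)+1) :=
    Real.rpow_le_rpow (by positivity) h (by positivity)
  have e1 : (a ^ ((1:ℝ)/(n+1)) * t ^ ((n:ℝ)/(n+1))) ^ ((n:ℝ)+1) = a * t ^ n := by
    rw [Real.mul_rpow (by positivity) (by positivity), ← Real.rpow_natCast t n,
      ← Real.rpow_mul ha, ← Real.rpow_mul ht, one_div_mul_cancel (ne_of_gt h1),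
      div_mul_cancel₀ _ (ne_of_gt h1), Real.rpow_one]
  have e2 : ((1/(n+1)) * a + ((n:ℝ)/(n+1)) * t) = (a + n*t)/(n+1) := by ring
  rw [e1, e2] at h2
  have e3 : ((a + ↑n * t) / (↑n + 1)) ^ ((n:ℝ)+1) = ((a + ↑n * t) / (↑n + 1)) ^ (n+1 : ℕ) := by
    rw [← Real.rpow_natCast ((a + ↑n * t) / (↑n + 1)) (n+1)]
    push_cast; ring_nf
  rw [e3, div_pow] at h2
  calc a * t ^ n * (↑n + 1) ^ (n + 1)
      ≤ ((a + ↑n * t) ^ (n+1) / (↑n + 1) ^ (n+1)) * (↑n + 1) ^ (n + 1) := by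
        apply mul_le_mul_of_nonneg_right h2 (by positivity)
    _ = (a + ↑n * t) ^ (n+1) := by field_simp

open scoped Classical in
lemma keylemma (n : ℕ) : ∀ (α : Type) [Fintype α] (r : α → α → Prop),
    Fintype.card α = n →
    (myE r n : ℝ) * (2*(n:ℝ))^n ≤ (2*(n:ℝ) + (myJ r : ℝ))^n := by
  induction n with
  | zero =>
    intro α _ r hcard
    simp only [Nat.cast_zero, mul_zero, pow_zero, mul_one]
    have hie : IsEmpty α := Fintype.card_eq_zero_iff.mp hcard
    have hsub : Subsingleton {f : α ≃ Fin 0 // ∀ x y : α, r x y → f x < f y} :=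
      ⟨fun F G => Subtype.ext (Equiv.ext fun y => isEmptyElim y)⟩
    have h1 : myE r 0 ≤ 1 := by
      have := Nat.card_le_card_of_injective
        (f := fun _ : {f : α ≃ Fin 0 // ∀ x y : α, r x y → f x < f y} => ())
        (fun a b _ => Subsingleton.elim a b)
      exact this.trans (le_of_eq Nat.card_unique)
    exact_mod_cast h1
  | succ n ih =>
    intro α _ r hcard
    classical
    set M : Finset α := Finset.univ.filter (fun x : α => ∀ y, ¬ r x y) with hM
    have hA : myE r (n+1) ≤ ∑ x ∈ M, myE (fun a b : {y : α // y ≠ x} => r a.val b.val) n :=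
      stepA (α := α) r n
    rcases Finset.eq_empty_or_nonempty M with hMe | hMne
    · rw [hMe] at hA
      simp only [Finset.sum_empty, Nat.le_zero] at hA
      rw [hA]
      simp only [Nat.cast_zero, zero_mul]
      positivity
    · have hmem : ∀ x ∈ M, ∀ y, ¬ r x y := fun x hx => (Finset.mem_filter.mp hx).2
      have hcsub : ∀ x : α, Fintype.card {y : α // y ≠ x} = n := by
        intro x
        have h := Fintype.card_subtype_compl (fun y : α => y = x)
        rw [Fintype.card_subtype_eq, hcard] at h
        simpa using h
      set J : ℝ := (myJ r : ℝ) with hJ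
      have hJ0 : 0 ≤ J := Nat.cast_nonneg _
      set m : ℝ := (M.card : ℝ) with hm
      have hm1 : 1 ≤ m := by
        rw [hm]; exact_mod_cast Finset.card_pos.mpr hMne
      have hmcard : m ≤ (n:ℝ) + 1 := by
        rw [hm]
        have h := Finset.card_le_card (Finset.subset_univ M)
        rw [Finset.card_univ, hcard] at h
        exact_mod_cast h
      have herase : ∀ x ∈ M, ((M.erase x).card : ℝ) = m - 1 := by
        intro x hx
        rw [Finset.card_erase_of_mem hx, hm]
        have h1 : 1 ≤ M.card := Finset.card_pos.mpr hMne
        push_cast [Nat.cast_sub h1]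
        ring
      set Tr : ℝ := 2*(n:ℝ) + J - 2*(m - 1) with hTr
      have hx_bound : ∀ x ∈ M, (myE (fun a b : {y : α // y ≠ x} => r a.val b.val) n : ℝ)
          * (2*(n:ℝ))^n ≤ Tr^n := by
        intro x hx
        have hih := ih {y : α // y ≠ x} (fun a b => r a.val b.val) (hcsub x)
        refine hih.trans ?_
        apply pow_le_pow_left₀ (by positivity)
        have hB : myJ (fun a b : {y : α // y ≠ x} => r a.val b.val) + 2 * (M.erase x).card
            ≤ myJ r := by
          rw [hM]; exact stepB r x (hmem x hx)
        have hBr : (myJ (fun a b : {y : α // y ≠ x} => r a.val b.val) : ℝ) + 2*(m-1) ≤ J := by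
          rw [hJ, ← herase x hx]
          exact_mod_cast hB
        rw [hTr]
        linarith
      have hTr0 : 0 ≤ Tr := by
        obtain ⟨x, hx⟩ := hMne
        have hB : myJ (fun a b : {y : α // y ≠ x} => r a.val b.val) + 2 * (M.erase x).card
            ≤ myJ r := by
          rw [hM]; exact stepB r x (hmem x hx)
        have h2 : 2*(m-1) ≤ J := by
          rw [hJ, ← herase x hx]
          exact_mod_cast le_trans (Nat.le_add_left _ _) hB
        rw [hTr]
        have : (0:ℝ) ≤ (n:ℝ) := Nat.cast_nonneg n
        linarith
      have hsum : (myE r (n+1) : ℝ) ≤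
          ∑ x ∈ M, (myE (fun a b : {y : α // y ≠ x} => r a.val b.val) n : ℝ) := by
        exact_mod_cast hA
      have hEb : (myE r (n+1) : ℝ) * (2*(n:ℝ))^n ≤ m * Tr^n := by
        calc (myE r (n+1) : ℝ) * (2*(n:ℝ))^n
            ≤ (∑ x ∈ M, (myE (fun a b : {y : α // y ≠ x} => r a.val b.val) n : ℝ)) * (2*(n:ℝ))^n :=
              mul_le_mul_of_nonneg_right hsum (by positivity)
          _ = ∑ x ∈ M, (myE (fun a b : {y : α // y ≠ x} => r a.val b.val) n : ℝ) * (2*(n:ℝ))^n :=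
              Finset.sum_mul _ _ _
          _ ≤ ∑ _x ∈ M, Tr^n := Finset.sum_le_sum hx_bound
          _ = m * Tr^n := by rw [Finset.sum_const, hm, nsmul_eq_mul]
      rcases Nat.eq_zero_or_pos n with h0 | hn
      · subst h0
        simp only [pow_zero, mul_one] at hEb
        norm_num at hmcard
        have hE1 : (myE r 1 : ℝ) ≤ 1 := by linarith
        norm_num
        linarith
      · have h2n : (0:ℝ) < (2*(n:ℝ))^n := by positivity
        have hdiv : (myE r (n+1) : ℝ) ≤ m * (Tr/(2*(n:ℝ)))^n := by
          rw [div_pow, ← mul_div_assoc, le_div_iff₀ h2n]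
          exact hEb
        have hAMGM := amgm m (Tr/(2*(n:ℝ))) (by linarith) (by positivity) n
        have hsum2 : m + (n:ℝ) * (Tr/(2*(n:ℝ))) = (n:ℝ) + 1 + J/2 := by
          have hn0 : (n:ℝ) ≠ 0 := by exact_mod_cast hn.ne'
          field_simp
          rw [hTr]
          ring
        rw [hsum2] at hAMGM
        push_cast
        calc (myE r (n+1) : ℝ) * (2*((n:ℝ)+1))^(n+1)
            = ((myE r (n+1) : ℝ) * ((n:ℝ)+1)^(n+1)) * 2^(n+1) := by rw [mul_pow]; ring
          _ ≤ ((m * (Tr/(2*(n:ℝ)))^n) * ((n:ℝ)+1)^(n+1)) * 2^(n+1) := by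
              apply mul_le_mul_of_nonneg_right _ (by positivity)
              exact mul_le_mul_of_nonneg_right hdiv (by positivity)
          _ = (m * (Tr/(2*(n:ℝ)))^n * ((n:ℝ)+1)^(n+1)) * 2^(n+1) := by ring
          _ ≤ ((n:ℝ) + 1 + J/2)^(n+1) * 2^(n+1) := mul_le_mul_of_nonneg_right hAMGM (by positivity)
          _ = (2*((n:ℝ)+1) + J)^(n+1) := by rw [← mul_pow]; congr 1; ring

/-- The number of linear extensions of a partial order `P` on `n` points:
bijections to `{1, ..., n}` (modeled as `Fin n` with its usual order) that
are strictly monotone with respect to `P`. -/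
noncomputable def linExtCount (n : ℕ) (P : PartialOrder (Fin n)) : ℕ :=
  Nat.card {f : Fin n ≃ Fin n // ∀ x y : Fin n, P.lt x y → f x < f y}

/-- The number of comparable pairs of `P`: each unordered comparable pair
`{x, y}` corresponds to exactly one ordered pair `(x, y)` with `x ≺ y`. -/
noncomputable def compCount (n : ℕ) (P : PartialOrder (Fin n)) : ℕ :=
  Nat.card {p : Fin n × Fin n // P.lt p.1 p.2}

-- pair counting
lemma pairCount (n : ℕ) (P : PartialOrder (Fin n)) :
    myJ P.lt + 2 * compCount n P + n ≤ n * n := by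
  classical
  have hirr : ∀ a : Fin n, ¬ P.lt a a := fun a => @lt_irrefl _ (@PartialOrder.toPreorder _ P) a
  have hasym : ∀ a b : Fin n, P.lt a b → ¬ P.lt b a :=
    fun a b h => @lt_asymm _ (@PartialOrder.toPreorder _ P) a b h
  let C := {p : Fin n × Fin n // p.1 ≠ p.2 ∧ ¬ P.lt p.1 p.2 ∧ ¬ P.lt p.2 p.1}
  let L := {p : Fin n × Fin n // P.lt p.1 p.2}
  let D := {p : Fin n × Fin n // p.1 ≠ p.2}
  have hlne : ∀ l : L, l.val.1 ≠ l.val.2 := fun l he => hirr l.val.1 (by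
    have := l.property; rw [← he] at this; exact this)
  let ψ : C ⊕ (L × Bool) → D := fun p =>
    match p with
    | Sum.inl c => ⟨c.val, c.property.1⟩
    | Sum.inr (l, true) => ⟨l.val, hlne l⟩
    | Sum.inr (l, false) => ⟨(l.val.2, l.val.1), fun he => (hlne l) he.symm⟩
  have hinj : Function.Injective ψ := by
    rintro (c | ⟨l, bb⟩) (c' | ⟨l', bb'⟩) heq
    · have e : c.val = c'.val := congrArg (fun d : D => d.val) heq
      exact congrArg Sum.inl (Subtype.ext e)
    · cases bb'
      · have e1 : c.val.1 = l'.val.2 := congrArg (fun d : D => d.val.1) heq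
        have e2 : c.val.2 = l'.val.1 := congrArg (fun d : D => d.val.2) heq
        have : P.lt c.val.2 c.val.1 := by rw [e1, e2]; exact l'.property
        exact absurd this c.property.2.2
      · have e1 : c.val.1 = l'.val.1 := congrArg (fun d : D => d.val.1) heq
        have e2 : c.val.2 = l'.val.2 := congrArg (fun d : D => d.val.2) heq
        have : P.lt c.val.1 c.val.2 := by rw [e1, e2]; exact l'.property
        exact absurd this c.property.2.1
    · cases bb
      · have e1 : c'.val.1 = l.val.2 := congrArg (fun d : D => d.val.1) heq.symm
        have e2 : c'.val.2 = l.val.1 := congrArg (fun d : D => d.val.2) heq.symm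
        have : P.lt c'.val.2 c'.val.1 := by rw [e1, e2]; exact l.property
        exact absurd this c'.property.2.2
      · have e1 : c'.val.1 = l.val.1 := congrArg (fun d : D => d.val.1) heq.symm
        have e2 : c'.val.2 = l.val.2 := congrArg (fun d : D => d.val.2) heq.symm
        have : P.lt c'.val.1 c'.val.2 := by rw [e1, e2]; exact l.property
        exact absurd this c'.property.2.1
    · cases bb <;> cases bb'
      · have e1 : l.val.2 = l'.val.2 := congrArg (fun d : D => d.val.1) heq
        have e2 : l.val.1 = l'.val.1 := congrArg (fun d : D => d.val.2) heq
        exact congrArg Sum.inr (Prod.ext (Subtype.ext (Prod.ext e2 e1)) rfl)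
      · have e1 : l.val.2 = l'.val.1 := congrArg (fun d : D => d.val.1) heq
        have e2 : l.val.1 = l'.val.2 := congrArg (fun d : D => d.val.2) heq
        have : P.lt l.val.2 l.val.1 := by rw [e1, e2]; exact l'.property
        exact absurd l.property (hasym _ _ this)
      · have e1 : l.val.1 = l'.val.2 := congrArg (fun d : D => d.val.1) heq
        have e2 : l.val.2 = l'.val.1 := congrArg (fun d : D => d.val.2) heq
        have : P.lt l'.val.2 l'.val.1 := by rw [← e1, ← e2]; exact l.property
        exact absurd l'.property (hasym _ _ this)
      · have e1 : l.val.1 = l'.val.1 := congrArg (fun d : D => d.val.1) heq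
        have e2 : l.val.2 = l'.val.2 := congrArg (fun d : D => d.val.2) heq
        exact congrArg Sum.inr (Prod.ext (Subtype.ext (Prod.ext e1 e2)) rfl)
  have hcard := Nat.card_le_card_of_injective ψ hinj
  rw [Nat.card_sum, Nat.card_prod] at hcard
  have hD : Nat.card D = n * n - n := by
    have hdiag : Fintype.card {p : Fin n × Fin n // p.1 = p.2} = n := by
      have e : {p : Fin n × Fin n // p.1 = p.2} ≃ Fin n :=
        { toFun := fun p => p.val.1
          invFun := fun a => ⟨(a, a), rfl⟩
          left_inv := fun p => Subtype.ext (Prod.ext rfl p.property)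
          right_inv := fun a => rfl }
      rw [Fintype.card_congr e, Fintype.card_fin]
    have h := Fintype.card_subtype_compl (fun p : Fin n × Fin n => p.1 = p.2)
    rw [hdiag, Fintype.card_prod, Fintype.card_fin] at h
    rw [Nat.card_eq_fintype_card]
    exact h
  have hBool : Nat.card Bool = 2 := by simp [Nat.card_eq_fintype_card]
  rw [hD, hBool] at hcard
  have hn2 : n ≤ n * n := by
    rcases Nat.eq_zero_or_pos n with h | h
    · simp [h]
    · calc n = n * 1 := (mul_one n).symm
        _ ≤ n * n := Nat.mul_le_mul_left n h
  have : Nat.card C + Nat.card L * 2 ≤ n * n - n := hcard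
  have hLC : Nat.card C = myJ P.lt := rfl
  have hLL : Nat.card L = compCount n P := rfl
  omega

theorem linExtCount_le_of_dense_delta_near_one (n : ℕ) (δ : ℝ) (hδ0 : 0 < δ) (hδ1 : δ < 1)
    (P : PartialOrder (Fin n))
    (hcomp : δ * ((n : ℝ) * ((n : ℝ) - 1) / 2) ≤ (compCount n P : ℝ)) :
    (linExtCount n P : ℝ) ≤
      (Nat.factorial n : ℝ) * Real.exp (2 / (1 - δ)) * (Real.exp 1 * (1 - δ) / 2) ^ n := by
  have hε : (0:ℝ) < 1 - δ := by linarith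
  set ε : ℝ := 1 - δ with hεd
  have hkey := keylemma n (Fin n) P.lt (Fintype.card_fin n)
  have hEeq : (linExtCount n P : ℝ) = (myE P.lt n : ℝ) := rfl
  have hE0 : (0:ℝ) ≤ (linExtCount n P : ℝ) := Nat.cast_nonneg _
  rcases Nat.eq_zero_or_pos n with h0 | hn
  · subst h0
    simp only [pow_zero, Nat.factorial_zero, Nat.cast_one, one_mul, mul_one]
    have h1 : (linExtCount 0 P : ℝ) ≤ 1 := by
      rw [hEeq]
      simpa using hkey
    refine h1.trans ?_
    exact Real.one_le_exp (by positivity)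
  -- n ≥ 1
  have hnR : (0:ℝ) < n := by exact_mod_cast hn
  have hpair := pairCount n P
  have hJr : (myJ P.lt : ℝ) ≤ ε * ((n:ℝ) * ((n:ℝ) - 1)) := by
    have hc : (myJ P.lt : ℝ) + 2 * (compCount n P : ℝ) + (n:ℝ) ≤ (n:ℝ) * (n:ℝ) := by
      exact_mod_cast hpair
    rw [hεd]
    nlinarith [hcomp]
  -- from key lemma: E ≤ (1 + ε(n-1)/2)^n
  have h2n : (0:ℝ) < (2*(n:ℝ))^n := by positivity
  have hbase : (0:ℝ) ≤ 1 + ε*((n:ℝ)-1)/2 := by nlinarith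
  have hEb : (linExtCount n P : ℝ) ≤ (1 + ε*((n:ℝ)-1)/2)^n := by
    rw [hEeq]
    have hchain : (myE P.lt n : ℝ) * (2*(n:ℝ))^n ≤ (1 + ε*((n:ℝ)-1)/2)^n * (2*(n:ℝ))^n := by
      calc (myE P.lt n : ℝ) * (2*(n:ℝ))^n ≤ (2*(n:ℝ) + (myJ P.lt : ℝ))^n := hkey
        _ ≤ ((1 + ε*((n:ℝ)-1)/2) * (2*(n:ℝ)))^n := by
            apply pow_le_pow_left₀ (by positivity)
            nlinarith [hJr]
        _ = (1 + ε*((n:ℝ)-1)/2)^n * (2*(n:ℝ))^n := mul_pow _ _ _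
    exact le_of_mul_le_mul_right hchain h2n
  -- step: 1 + ε(n-1)/2 ≤ (εn/2) exp(2/(εn))
  have hstep : 1 + ε*((n:ℝ)-1)/2 ≤ (ε*(n:ℝ)/2) * Real.exp (2/(ε*(n:ℝ))) := by
    have h1 : 2/(ε*(n:ℝ)) + 1 ≤ Real.exp (2/(ε*(n:ℝ))) := Real.add_one_le_exp _
    have h2 : (ε*(n:ℝ)/2) * (2/(ε*(n:ℝ)) + 1) = 1 + ε*(n:ℝ)/2 := by
      field_simp
    nlinarith [mul_le_mul_of_nonneg_left h1 (by positivity : (0:ℝ) ≤ ε*(n:ℝ)/2)]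
  have hEb2 : (linExtCount n P : ℝ) ≤ (ε*(n:ℝ)/2)^n * Real.exp (2/ε) := by
    refine hEb.trans ?_
    calc (1 + ε*((n:ℝ)-1)/2)^n ≤ ((ε*(n:ℝ)/2) * Real.exp (2/(ε*(n:ℝ))))^n :=
          pow_le_pow_left₀ hbase hstep n
      _ = (ε*(n:ℝ)/2)^n * (Real.exp (2/(ε*(n:ℝ))))^n := mul_pow _ _ _
      _ = (ε*(n:ℝ)/2)^n * Real.exp (2/ε) := by
          congr 1
          rw [← Real.exp_nat_mul]
          congr 1
          field_simp
  -- (n/e)^n ≤ n!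
  have hfact : ((n:ℝ)/Real.exp 1)^n ≤ (Nat.factorial n : ℝ) := by
    have hterm : ((n:ℝ))^n / (Nat.factorial n : ℝ) ≤ Real.exp (n:ℝ) := by
      have hsum := Real.sum_le_exp_of_nonneg (le_of_lt hnR) (n+1)
      refine le_trans ?_ hsum
      have := Finset.single_le_sum (f := fun i => ((n:ℝ))^i / (Nat.factorial i : ℝ))
        (fun i _ => by positivity) (Finset.self_mem_range_succ n)
      exact this
    rw [div_pow]
    rw [div_le_iff₀ (by positivity)]
    rw [Real.exp_one_pow]
    rw [div_le_iff₀ (by positivity : (0:ℝ) < (Nat.factorial n : ℝ))] at hterm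
    calc ((n:ℝ))^n ≤ Real.exp (n:ℝ) * (Nat.factorial n : ℝ) := hterm
      _ = (Nat.factorial n : ℝ) * Real.exp (n:ℝ) := mul_comm _ _
  -- final assembly
  have hsplit : (ε*(n:ℝ)/2)^n = ((n:ℝ)/Real.exp 1)^n * (Real.exp 1 * ε / 2)^n := by
    rw [← mul_pow]
    congr 1
    field_simp [Real.exp_ne_zero]
  refine hEb2.trans ?_
  rw [hsplit]
  calc ((n:ℝ)/Real.exp 1)^n * (Real.exp 1 * ε / 2)^n * Real.exp (2/ε)
      ≤ (Nat.factorial n : ℝ) * (Real.exp 1 * ε / 2)^n * Real.exp (2/ε) := by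
        apply mul_le_mul_of_nonneg_right _ (by positivity)
        exact mul_le_mul_of_nonneg_right hfact (by positivity)
    _ = (Nat.factorial n : ℝ) * Real.exp (2/ε) * (Real.exp 1 * ε / 2)^n := by ring
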